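/- (Change of variables between the unit ball and the backward light cone.) Let t > 0 and x ∈ ℝ³ with |x| < t, and for η ∈ S² set R(η) = (t² − |x|²)/(2(t − ⟨x,η⟩)), where ⟨·,·⟩ is the Euclidean inner product (note 0 < R(η) < t). Then for every continuous P : ℝ³ → ℝ vanishing outside the closed unit ball, ∫_{|y| ≤ 1} P(y) dy = ∫_{S²} ∫_{0}^{R(η)} P( (x − Rη)/(t − R) ) · R²·(t − ⟨x,η⟩)/(R − t)⁴ dR dσ(η), where dy is Lebesgue measure on ℝ³ and σ is the standard surface measure on the unit sphere S² ⊆ ℝ³. -/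

import Mathlib

noncomputable section

open MeasureTheory Metric

/-- Euclidean `ℝ³`. -/
abbrev E3 := EuclideanSpace ℝ (Fin 3)

/-- The surface measure `σ` on the unit sphere `S² ⊆ ℝ³` (total mass `4π`). -/
def sphMeas : Measure (sphere (0 : E3) 1) := (volume : Measure E3).toSphere

open Set

lemma dimE3 : Module.finrank ℝ E3 = 3 := by simp

/-- Polar coordinates in `ℝ³`. -/
lemma polar_integral (f : E3 → ℝ) (hf : Integrable f) :
    ∫ z, f z = ∫ η : sphere (0 : E3) 1, ∫ r in Ioi (0 : ℝ), r ^ 2 * f (r • (η : E3)) ∂volume ∂sphMeas := by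
  have hmp := (volume : Measure E3).measurePreserving_homeomorphUnitSphereProd
  rw [dimE3] at hmp
  have hemb := (Homeomorph.measurableEmbedding (homeomorphUnitSphereProd E3))
  set g : sphere (0 : E3) 1 × Ioi (0 : ℝ) → ℝ := fun p => f ((p.2 : ℝ) • (p.1 : E3)) with hg
  have hcomp : ∀ z : ({0}ᶜ : Set E3), g (homeomorphUnitSphereProd E3 z) = f z := by
    intro z
    simp only [hg, homeomorphUnitSphereProd_apply_snd_coe, homeomorphUnitSphereProd_apply_fst_coe]
    rw [smul_smul, mul_inv_cancel₀ (norm_ne_zero_iff.2 z.2), one_smul]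
  have hfc : Integrable (fun z : ({0}ᶜ : Set E3) => f z) ((volume : Measure E3).comap (↑)) := by
    have h0 : IntegrableOn f ({0}ᶜ : Set E3) volume := hf.integrableOn
    rw [IntegrableOn, ← map_comap_subtype_coe (measurableSet_singleton (0:E3)).compl,
      integrable_map_measure (by rw [map_comap_subtype_coe (measurableSet_singleton (0:E3)).compl]
                                 exact hf.aestronglyMeasurable.restrict)
        measurable_subtype_coe.aemeasurable] at h0
    exact h0
  have h1 : ∫ z, f z = ∫ z : ({0}ᶜ : Set E3), f z ∂((volume : Measure E3).comap (↑)) := by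
    rw [integral_subtype_comap (measurableSet_singleton 0).compl fun z => f z,
      restrict_compl_singleton]
  have h2 : ∫ z : ({0}ᶜ : Set E3), f z ∂((volume : Measure E3).comap (↑))
      = ∫ p, g p ∂((volume : Measure E3).toSphere.prod (.volumeIoiPow 2)) := by
    rw [← hmp.integral_comp hemb g]
    exact integral_congr_ae (Filter.Eventually.of_forall fun z => (hcomp z).symm)
  have hgint : Integrable g ((volume : Measure E3).toSphere.prod (.volumeIoiPow 2)) := by
    rw [← hmp.integrable_comp_emb hemb]
    exact hfc.congr (Filter.Eventually.of_forall fun z => (hcomp z).symm)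
  rw [h1, h2, integral_prod g hgint]
  rw [show sphMeas = (volume : Measure E3).toSphere from rfl]
  refine integral_congr_ae (Filter.Eventually.of_forall fun η => ?_)
  dsimp only
  simp only [Measure.volumeIoiPow, ENNReal.ofReal]
  rw [integral_withDensity_eq_integral_smul ((measurable_subtype_coe.pow_const 2).real_toNNReal) _]
  rw [integral_subtype_comap measurableSet_Ioi (fun a : ℝ => (a ^ 2).toNNReal • f (a • (η : E3)))]
  refine setIntegral_congr_fun measurableSet_Ioi fun r hr => ?_
  rw [NNReal.smul_def, Real.coe_toNNReal _ (by positivity)]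
  rfl

/-- Determinant of `c • (-id) + k • (⟪v,·⟫ • u)` on `ℝ³`. -/
lemma det_aux (c k : ℝ) (v u : E3) :
    ContinuousLinearMap.det
      (c • (-(ContinuousLinearMap.id ℝ E3)) + k • ((innerSL ℝ v).smulRight u))
      = -c ^ 3 + c ^ 2 * k * (inner ℝ v u : ℝ) := by
  rw [ContinuousLinearMap.det, ← LinearMap.det_toMatrix (PiLp.basisFun 2 ℝ (Fin 3)),
    Matrix.det_fin_three]
  simp [LinearMap.toMatrix_apply, PiLp.basisFun_apply, PiLp.basisFun_repr, PiLp.inner_apply,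
    RCLike.inner_apply, Fin.sum_univ_three, EuclideanSpace.single_apply]
  ring

lemma hasFDerivAt_norm' (z : E3) (hz : z ≠ 0) :
    HasFDerivAt (fun w : E3 => ‖w‖) (‖z‖⁻¹ • innerSL ℝ z) z := by
  have hn2 : HasFDerivAt (fun w : E3 => ‖w‖ ^ 2) (2 • innerSL ℝ z) z := by
    simpa using (hasFDerivAt_id z).norm_sq
  have hne : ‖z‖ ^ 2 ≠ 0 := pow_ne_zero 2 (norm_ne_zero_iff.2 hz)
  have h := hn2.sqrt hne
  have heq : (fun w : E3 => Real.sqrt (‖w‖ ^ 2)) = fun w : E3 => ‖w‖ := by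
    funext w; exact Real.sqrt_sq (norm_nonneg w)
  rw [heq] at h
  refine h.congr_fderiv ?_
  rw [Real.sqrt_sq (norm_nonneg z)]
  ext w
  simp [smul_smul]
  ring

/-- The change-of-variables map `z ↦ (x - z)/(t - ‖z‖)`. -/
def Psi (t : ℝ) (x : E3) (z : E3) : E3 := (t - ‖z‖)⁻¹ • (x - z)

/-- Its derivative. -/
def PsiD (t : ℝ) (x : E3) (z : E3) : E3 →L[ℝ] E3 :=
  (t - ‖z‖)⁻¹ • (-(ContinuousLinearMap.id ℝ E3)) +
    (((t - ‖z‖) ^ 2)⁻¹ * ‖z‖⁻¹) • ((innerSL ℝ z).smulRight (x - z))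

lemma hasFDerivAt_Psi (t : ℝ) (x z : E3) (hz : z ≠ 0) (hzt : t - ‖z‖ ≠ 0) :
    HasFDerivAt (Psi t x) (PsiD t x z) z := by
  have hnorm := hasFDerivAt_norm' z hz
  have hsub : HasFDerivAt (fun w : E3 => t - ‖w‖) (-(‖z‖⁻¹ • innerSL ℝ z)) z := by
    exact ((hasFDerivAt_const t z).sub hnorm).congr_fderiv (by simp)
  have hinv : HasFDerivAt (fun w : E3 => (t - ‖w‖)⁻¹)
      ((-((t - ‖z‖) ^ 2)⁻¹) • -(‖z‖⁻¹ • innerSL ℝ z)) z :=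
    (hasDerivAt_inv hzt).comp_hasFDerivAt z hsub
  have hlin : HasFDerivAt (fun w : E3 => x - w) (-(ContinuousLinearMap.id ℝ E3)) z := by
    exact ((hasFDerivAt_const x z).sub (hasFDerivAt_id (𝕜 := ℝ) z)).congr_fderiv (by simp)
  have h := hinv.smul hlin
  refine h.congr_fderiv ?_
  ext w
  simp [PsiD, smul_smul]

/-- The integrand after the change of variables. -/
def Fz (t : ℝ) (x : E3) (P : E3 → ℝ) (z : E3) : ℝ :=
  P (Psi t x z) * ((t * ‖z‖ - (inner ℝ x z : ℝ)) / (‖z‖ * (t - ‖z‖) ^ 4))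

lemma normsq_key (t : ℝ) (x z : E3) :
    ‖x - z‖ ^ 2 - (t - ‖z‖) ^ 2 = ‖x‖ ^ 2 - t ^ 2 + 2 * (t * ‖z‖ - (inner ℝ x z : ℝ)) := by
  rw [@norm_sub_sq_real E3]
  ring

lemma quad_root_eq {a b c u₁ u₂ T : ℝ} (ha : a < 0)
    (h1 : a * u₁ ^ 2 + b * u₁ + c = 0) (h2 : a * u₂ ^ 2 + b * u₂ + c = 0)
    (hu₁ : u₁ < T) (hu₂ : u₂ < T) (hT : 0 ≤ a * T ^ 2 + b * T + c) : u₁ = u₂ := by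
  by_contra hne
  have h3 : (b + a * (u₁ + u₂)) * (u₁ - u₂) = 0 := by linear_combination h1 - h2
  have hb : b = -(a * (u₁ + u₂)) := by
    rcases mul_eq_zero.1 h3 with h | h
    · linarith
    · exact absurd (sub_eq_zero.1 h) hne
  have hc : c = a * u₁ * u₂ := by linear_combination h1 - u₁ * hb
  have hpos : 0 < (T - u₁) * (T - u₂) := mul_pos (by linarith) (by linarith)
  nlinarith [mul_neg_of_neg_of_pos ha hpos]

lemma inner_step (t : ℝ) (x : E3) (ht : 0 < t) (hx : ‖x‖ < t)
    (P : E3 → ℝ) (hsupp : ∀ y : E3, 1 < ‖y‖ → P y = 0) (η : E3) (hη : ‖η‖ = 1) :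
    (∫ r in Ioi (0:ℝ), r ^ 2 * Fz t x P (r • η))
      = ∫ R in (0:ℝ)..((t ^ 2 - ‖x‖ ^ 2) / (2 * (t - inner ℝ x η))),
          P ((t - R)⁻¹ • (x - R • η)) * (R ^ 2 * (t - inner ℝ x η) / (R - t) ^ 4) := by
  set ip : ℝ := inner ℝ x η with hipdef
  have hipx : ip ≤ ‖x‖ := by
    calc ip ≤ ‖x‖ * ‖η‖ := real_inner_le_norm x η
    _ = ‖x‖ := by rw [hη, mul_one]
  have hipt : 0 < t - ip := by linarith
  set Rη : ℝ := (t ^ 2 - ‖x‖ ^ 2) / (2 * (t - ip)) with hRdef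
  have hx0 : 0 ≤ ‖x‖ := norm_nonneg x
  have hRpos : 0 < Rη := div_pos (by nlinarith) (by linarith)
  have hRt : Rη < t := by
    rw [hRdef, div_lt_iff₀ (by linarith)]
    nlinarith
  have hc : 2 * (t - ip) * Rη = t ^ 2 - ‖x‖ ^ 2 := by
    rw [hRdef]; field_simp
  set h : ℝ → ℝ := fun R => P ((t - R)⁻¹ • (x - R • η)) * (R ^ 2 * (t - ip) / (R - t) ^ 4) with hhdef
  have hnr : ∀ r : ℝ, 0 < r → ‖r • η‖ = r := fun r hr => by
    rw [norm_smul, Real.norm_eq_abs, abs_of_pos hr, hη, mul_one]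
  have step1 : (∫ r in Ioi (0:ℝ), r ^ 2 * Fz t x P (r • η)) = ∫ r in Ioi (0:ℝ), h r := by
    refine setIntegral_congr_fun measurableSet_Ioi fun r hr => ?_
    have hr0 : (0:ℝ) < r := hr
    have hinner : (inner ℝ x (r • η) : ℝ) = r * ip := real_inner_smul_right x η r
    simp only [Fz, Psi, hnr r hr0, hinner, hhdef]
    rw [show (r - t) ^ 4 = (t - r) ^ 4 by ring]
    rcases eq_or_ne (t - r) 0 with h0 | h0
    · rw [h0]; simp
    · field_simp
  have hfin : ({t, Rη} : Set ℝ).Finite := (Set.finite_singleton Rη).insert t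
  have step2 : (∫ r in Ioi (0:ℝ), h r) = ∫ r in Ioi (0:ℝ), (Ioo (0:ℝ) Rη).indicator h r := by
    refine integral_congr_ae ?_
    filter_upwards [ae_restrict_of_ae (measure_eq_zero_iff_ae_notMem.1 (hfin.measure_zero volume)),
      ae_restrict_mem measurableSet_Ioi] with r hrn hrIoi
    have hrt : r ≠ t := fun hh => hrn (by simp [hh])
    have hrR : r ≠ Rη := fun hh => hrn (by simp [hh])
    rcases lt_or_gt_of_ne hrR with hlt | hgt
    · rw [indicator_of_mem (show r ∈ Ioo (0:ℝ) Rη from ⟨hrIoi, hlt⟩)]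
    · rw [indicator_of_notMem (fun hm => absurd hm.2 (not_lt.2 hgt.le))]
      have hr0 : (0:ℝ) < r := hrIoi
      have hkey : ‖x - r • η‖ ^ 2 - (t - r) ^ 2 = 2 * (t - ip) * (r - Rη) := by
        have hk := normsq_key t x (r • η)
        rw [hnr r hr0, real_inner_smul_right] at hk
        linear_combination hk + hc
      have hsq : (t - r) ^ 2 < ‖x - r • η‖ ^ 2 := by
        nlinarith [mul_pos hipt (sub_pos.2 hgt)]
      have habs : |t - r| < ‖x - r • η‖ := by
        have h2 := Real.sqrt_lt_sqrt (sq_nonneg (t - r)) hsq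
        rwa [Real.sqrt_sq_eq_abs, Real.sqrt_sq (norm_nonneg _)] at h2
      have habs0 : 0 < |t - r| := abs_pos.2 (sub_ne_zero.2 fun hh => hrt hh.symm)
      have hnorm1 : 1 < ‖(t - r)⁻¹ • (x - r • η)‖ := by
        rw [norm_smul, Real.norm_eq_abs, abs_inv, inv_mul_eq_div, lt_div_iff₀ habs0, one_mul]
        exact habs
      simp only [hhdef]
      rw [hsupp _ hnorm1, zero_mul]
  have hinter : Ioo (0:ℝ) Rη ∩ Ioi 0 = Ioo (0:ℝ) Rη := inter_eq_left.2 fun r hr => hr.1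
  rw [step1, step2, integral_indicator measurableSet_Ioo,
    Measure.restrict_restrict measurableSet_Ioo, hinter,
    intervalIntegral.integral_of_le hRpos.le, integral_Ioc_eq_integral_Ioo]


set_option maxHeartbeats 2000000

/-- change of variables between the unit ball and the backward light cone:
for `0 ≤ |x| < t` and continuous `P` vanishing outside the closed unit ball,
`∫_{|y|≤1} P(y) dy = ∫_{S²} ∫_0^{R(η)} P((x−Rη)/(t−R))·R²(t−⟨x,η⟩)/(R−t)⁴ dR dσ(η)`
where `R(η) = (t²−|x|²)/(2(t−⟨x,η⟩))`. -/
theorem ball_cone_change_of_variables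
    (t : ℝ) (x : E3) (ht : 0 < t) (hx : ‖x‖ < t)
    (P : E3 → ℝ) (hP : Continuous P) (hsupp : ∀ y : E3, 1 < ‖y‖ → P y = 0) :
    ∫ y in closedBall (0 : E3) 1, P y =
      ∫ η : sphere (0 : E3) 1,
        (∫ R in (0 : ℝ)..((t ^ 2 - ‖x‖ ^ 2) / (2 * (t - inner ℝ x (η : E3)))),
          P ((t - R)⁻¹ • (x - R • (η : E3))) *
            (R ^ 2 * (t - inner ℝ x (η : E3)) / (R - t) ^ 4)) ∂sphMeas := by
  classical
  set g : E3 → ℝ := fun z => ‖z‖ + ‖x - z‖ with hgdef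
  set s₀ : Set E3 := {z : E3 | g z < t} with hs₀def
  set s : Set E3 := s₀ \ {0} with hsdef
  -- convexity of g
  have haff : ∃ A : E3 →ᵃ[ℝ] E3, ∀ z, A z = x - z := by
    refine ⟨AffineMap.mk' (fun z => x - z) (-(LinearMap.id : E3 →ₗ[ℝ] E3)) 0 ?_, fun z => rfl⟩
    intro p; simp [sub_eq_add_neg]; abel
  obtain ⟨A, hA⟩ := haff
  have hgcvx : ConvexOn ℝ univ g := by
    have h1 : ConvexOn ℝ univ fun z : E3 => ‖z‖ := convexOn_univ_norm
    have h2 : ConvexOn ℝ univ fun z : E3 => ‖x - z‖ := by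
      have := (convexOn_univ_norm (E := E3)).comp_affineMap A
      have heq : (fun z : E3 => ‖z‖) ∘ A = fun z : E3 => ‖x - z‖ := by
        funext z; simp [hA]
      rwa [heq, Set.preimage_univ] at this
    exact h1.add h2
  have hs₀cvx : Convex ℝ s₀ := by
    have := hgcvx.convex_lt t
    have heq : {z ∈ univ | g z < t} = s₀ := by ext z; simp [hs₀def]
    rwa [heq] at this
  have hs₀open : IsOpen s₀ :=
    isOpen_lt (by fun_prop) continuous_const
  have hsmeas : MeasurableSet s := hs₀open.measurableSet.diff (measurableSet_singleton 0)
  -- basic facts on s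
  have hmem : ∀ z ∈ s, z ≠ 0 ∧ 0 < ‖z‖ ∧ ‖z‖ < t ∧ ‖x - z‖ < t - ‖z‖ := by
    intro z hz
    have hz0 : z ≠ 0 := hz.2
    have hg : ‖z‖ + ‖x - z‖ < t := hz.1
    have h1 : 0 < ‖z‖ := norm_pos_iff.2 hz0
    exact ⟨hz0, h1, by nlinarith [norm_nonneg (x - z)], by linarith⟩
  -- derivative on s
  have hPsiD : ∀ z ∈ s, HasFDerivWithinAt (Psi t x) (PsiD t x z) s z := by
    intro z hz
    obtain ⟨hz0, h1, h2, h3⟩ := hmem z hz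
    exact (hasFDerivAt_Psi t x z hz0 (by linarith)).hasFDerivWithinAt
  -- determinant on s
  have hdet : ∀ z ∈ s, |(PsiD t x z).det|
      = (t * ‖z‖ - (inner ℝ x z : ℝ)) / (‖z‖ * (t - ‖z‖) ^ 4) := by
    intro z hz
    obtain ⟨hz0, h1, h2, h3⟩ := hmem z hz
    have hu : 0 < t - ‖z‖ := by linarith [norm_nonneg (x - z)]
    have hinner : (inner ℝ z (x - z) : ℝ) = (inner ℝ x z : ℝ) - ‖z‖ ^ 2 := by
      rw [inner_sub_right, real_inner_comm z x, real_inner_self_eq_norm_sq]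
    have hdval : (PsiD t x z).det
        = ((inner ℝ x z : ℝ) - t * ‖z‖) / (‖z‖ * (t - ‖z‖) ^ 4) := by
      simp only [PsiD]
      rw [det_aux, hinner]
      field_simp
      ring
    have hnum : (inner ℝ x z : ℝ) - t * ‖z‖ < 0 := by
      have := real_inner_le_norm x z
      nlinarith
    have hden : 0 < ‖z‖ * (t - ‖z‖) ^ 4 := mul_pos h1 (pow_pos hu 4)
    rw [hdval, abs_of_neg (div_neg_of_neg_of_pos hnum hden)]
    ring
  -- injectivity
  have hyltgen : ∀ z ∈ s, ‖Psi t x z‖ < 1 := by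
    intro z hz
    obtain ⟨hz0, h1, h2, h3⟩ := hmem z hz
    have hu : 0 < t - ‖z‖ := by linarith [norm_nonneg (x - z)]
    rw [Psi, norm_smul, Real.norm_eq_abs, abs_of_pos (inv_pos.2 hu), inv_mul_eq_div,
      div_lt_one hu]
    exact h3
  have hrecover : ∀ z ∈ s, x - (t - ‖z‖) • Psi t x z = z := by
    intro z hz
    obtain ⟨hz0, h1, h2, h3⟩ := hmem z hz
    have hu : (0:ℝ) < t - ‖z‖ := by linarith [norm_nonneg (x - z)]
    rw [Psi, smul_smul, mul_inv_cancel₀ hu.ne', one_smul]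
    abel
  have hexpand : ∀ (u : ℝ) (y : E3), ‖x - u • y‖ ^ 2
      = ‖x‖ ^ 2 - 2 * u * (inner ℝ x y : ℝ) + u ^ 2 * ‖y‖ ^ 2 := by
    intro u y
    rw [@norm_sub_sq_real E3, real_inner_smul_right, norm_smul, Real.norm_eq_abs, mul_pow, sq_abs]
    ring
  have hinj : InjOn (Psi t x) s := by
    intro z₁ hz₁ z₂ hz₂ heq
    obtain ⟨hz10, h11, h12, h13⟩ := hmem z₁ hz₁
    obtain ⟨hz20, h21, h22, h23⟩ := hmem z₂ hz₂
    set y := Psi t x z₁ with hy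
    have hb1 : x - (t - ‖z₁‖) • y = z₁ := hrecover z₁ hz₁
    have hb2 : x - (t - ‖z₂‖) • y = z₂ := by rw [heq]; exact hrecover z₂ hz₂
    have hylt : ‖y‖ < 1 := hyltgen z₁ hz₁
    have hroot : ∀ z : E3, z ∈ s → x - (t - ‖z‖) • y = z →
        (‖y‖ ^ 2 - 1) * (t - ‖z‖) ^ 2 + (2 * t - 2 * (inner ℝ x y : ℝ)) * (t - ‖z‖)
          + (‖x‖ ^ 2 - t ^ 2) = 0 := by
      intro z hz hzz
      have hsq : ‖x - (t - ‖z‖) • y‖ ^ 2 = ‖z‖ ^ 2 := by rw [hzz]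
      have hfin : (‖y‖ ^ 2 - 1) * (t - ‖z‖) ^ 2 + (2 * t - 2 * (inner ℝ x y : ℝ)) * (t - ‖z‖)
          + (‖x‖ ^ 2 - t ^ 2) = ‖x - (t - ‖z‖) • y‖ ^ 2 - ‖z‖ ^ 2 := by
        rw [hexpand]
        ring
      rw [hfin, hsq, sub_self]
    have hT : 0 ≤ (‖y‖ ^ 2 - 1) * t ^ 2 + (2 * t - 2 * (inner ℝ x y : ℝ)) * t
        + (‖x‖ ^ 2 - t ^ 2) := by
      have hfin : (‖y‖ ^ 2 - 1) * t ^ 2 + (2 * t - 2 * (inner ℝ x y : ℝ)) * t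
          + (‖x‖ ^ 2 - t ^ 2) = ‖x - t • y‖ ^ 2 := by
        rw [hexpand]
        ring
      rw [hfin]
      positivity
    have ha : ‖y‖ ^ 2 - 1 < 0 := by nlinarith [norm_nonneg y]
    have hueq : t - ‖z₁‖ = t - ‖z₂‖ :=
      quad_root_eq ha (hroot z₁ hz₁ hb1) (hroot z₂ hz₂ hb2) (by linarith) (by linarith) hT
    rw [← hb1, ← hb2, hueq]
  -- image
  have himg : Psi t x '' s = ball (0:E3) 1 \ {t⁻¹ • x} := by
    apply Subset.antisymm
    · rintro _ ⟨z, hz, rfl⟩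
      obtain ⟨hz0, h1, h2, h3⟩ := hmem z hz
      have hu : (0:ℝ) < t - ‖z‖ := by linarith [norm_nonneg (x - z)]
      refine ⟨mem_ball_zero_iff.2 (hyltgen z hz), ?_⟩
      simp only [mem_singleton_iff]
      intro hcontra
      have h4 := congrArg (fun w : E3 => (t * (t - ‖z‖)) • w) hcontra
      simp only [Psi, smul_smul] at h4
      have e1 : t * (t - ‖z‖) * (t - ‖z‖)⁻¹ = t := by field_simp
      have e2 : t * (t - ‖z‖) * t⁻¹ = t - ‖z‖ := by field_simp
      rw [e1, e2] at h4
      have h5 : t • z = ‖z‖ • x := by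
        have h6 : t • x - t • z = (t - ‖z‖) • x := by rw [← smul_sub, h4]
        have h7 : (t - ‖z‖) • x = t • x - ‖z‖ • x := sub_smul t ‖z‖ x
        rw [h7] at h6
        have := congrArg (fun w : E3 => t • x - w) h6
        simpa using this
      have h6 : t * ‖z‖ = ‖z‖ * ‖x‖ := by
        have h7 := congrArg norm h5
        rwa [norm_smul, norm_smul, Real.norm_eq_abs, Real.norm_eq_abs,
          abs_of_pos ht, abs_of_pos h1] at h7
      nlinarith
    · rintro y ⟨hyball, hynx⟩
      rw [mem_ball_zero_iff] at hyball
      have hynx' : x - t • y ≠ 0 := by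
        intro hcontra
        apply hynx
        simp only [mem_singleton_iff]
        have hxy : x = t • y := by rwa [sub_eq_zero] at hcontra
        rw [hxy, smul_smul, inv_mul_cancel₀ ht.ne', one_smul]
      set q : ℝ → ℝ := fun u => ‖x - u • y‖ ^ 2 - (t - u) ^ 2 with hq
      have hq0 : q 0 < 0 := by
        simp only [hq, zero_smul, sub_zero]
        nlinarith [norm_nonneg x]
      have hqt : 0 < q t := by
        simp only [hq, sub_self]
        have := pow_pos (norm_pos_iff.2 hynx') 2
        nlinarith
      have hcont : ContinuousOn q (Icc 0 t) := (by fun_prop : Continuous q).continuousOn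
      obtain ⟨u, huIoo, hqu⟩ := intermediate_value_Ioo ht.le hcont (⟨hq0, hqt⟩ : (0:ℝ) ∈ Ioo (q 0) (q t))
      set z := x - u • y with hzdef
      have hnz : ‖z‖ = t - u := by
        have h1 : ‖z‖ ^ 2 = (t - u) ^ 2 := by
          have h2 : ‖x - u • y‖ ^ 2 - (t - u) ^ 2 = 0 := hqu
          have : ‖z‖ ^ 2 = ‖x - u • y‖ ^ 2 := by rw [hzdef]
          linarith
        have h3 := congrArg Real.sqrt h1
        rwa [Real.sqrt_sq (norm_nonneg z), Real.sqrt_sq (by linarith [huIoo.2] : (0:ℝ) ≤ t - u)] at h3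
      have hxz : x - z = u • y := by rw [hzdef]; abel
      refine ⟨z, ⟨?_, ?_⟩, ?_⟩
      · show g z < t
        rw [hgdef]
        simp only
        rw [hnz, hxz, norm_smul, Real.norm_eq_abs, abs_of_pos huIoo.1]
        nlinarith [huIoo.1, huIoo.2, norm_nonneg y]
      · simp only [mem_singleton_iff]
        intro h0
        rw [h0, norm_zero] at hnz
        linarith [huIoo.2]
      · rw [Psi, hnz, show t - (t - u) = u from by ring, hxz, smul_smul,
          inv_mul_cancel₀ (ne_of_gt huIoo.1), one_smul]
  -- vanishing of Fz outside s
  have hPsiBig : ∀ z : E3, t < g z → ‖z‖ ≠ t → Fz t x P z = 0 := by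
    intro z hgz hzt
    have hgz' : t < ‖z‖ + ‖x - z‖ := hgz
    have h2 : ‖z‖ - t < ‖x - z‖ := by
      have h3 : ‖z‖ - ‖x‖ ≤ ‖z - x‖ := norm_sub_norm_le z x
      rw [norm_sub_rev] at h3
      linarith
    have habs : |t - ‖z‖| < ‖x - z‖ := abs_lt.2 ⟨by linarith, by linarith⟩
    have habs0 : 0 < |t - ‖z‖| := abs_pos.2 (sub_ne_zero.2 fun hh => hzt hh.symm)
    have hbig : 1 < ‖Psi t x z‖ := by
      rw [Psi, norm_smul, Real.norm_eq_abs, abs_inv, inv_mul_eq_div, lt_div_iff₀ habs0, one_mul]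
      exact habs
    rw [Fz, hsupp _ hbig, zero_mul]
  have hgx : g x < t := by
    show ‖x‖ + ‖x - x‖ < t
    simpa using hx
  have hFzero : ∀ᵐ z : E3, z ∉ s → Fz t x P z = 0 := by
    have hN : volume (frontier s₀ ∪ {0} : Set E3) = 0 :=
      measure_union_null (hs₀cvx.addHaar_frontier volume) (measure_singleton 0)
    filter_upwards [measure_eq_zero_iff_ae_notMem.1 hN] with z hzN hzs
    have hzfr : z ∉ frontier s₀ := fun hh => hzN (Or.inl hh)
    have hz0 : z ≠ 0 := fun hh => hzN (Or.inr (by rw [hh]; rfl))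
    rcases lt_trichotomy (g z) t with hlt | heqt | hgt
    · exact absurd ⟨hlt, fun hh => hz0 hh⟩ hzs
    · exfalso
      apply hzfr
      have hcl : z ∈ closure s₀ := by
        apply mem_closure_iff_seq_limit.2
        refine ⟨fun n => (1/(n+1) : ℝ) • x + (1 - 1/(n+1) : ℝ) • z, fun n => ?_, ?_⟩
        · have hθ : 0 < (1/(n+1) : ℝ) := by positivity
          have hθ1 : (1/(n+1) : ℝ) ≤ 1 := by
            rw [div_le_one (by positivity)]
            linarith [Nat.cast_nonneg (α := ℝ) n]
          have hcomb := hgcvx.2 (mem_univ x) (mem_univ z) hθ.le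
            (by linarith : (0:ℝ) ≤ 1 - 1/(n+1)) (by ring)
          simp only [smul_eq_mul] at hcomb
          rw [heqt] at hcomb
          show g ((1/(n+1) : ℝ) • x + (1 - 1/(n+1) : ℝ) • z) < t
          linarith [mul_neg_of_pos_of_neg hθ (sub_neg.2 hgx)]
        · have hlim0 : Filter.Tendsto (fun n : ℕ => (1/(n+1) : ℝ)) Filter.atTop (nhds 0) :=
            tendsto_one_div_add_atTop_nhds_zero_nat
          have hlim := (hlim0.smul_const x).add
            (((tendsto_const_nhds :
                Filter.Tendsto (fun _ : ℕ => (1:ℝ)) Filter.atTop (nhds 1)).sub hlim0).smul_const z)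
          simpa using hlim
      rw [hs₀open.frontier_eq]
      exact ⟨hcl, fun hzs₀ => absurd (show g z < t from hzs₀) (by rw [heqt]; exact lt_irrefl t)⟩
    · rcases eq_or_ne ‖z‖ t with hzt | hzt
      · simp [Fz, hzt]
      · exact hPsiBig z hgt hzt
  -- integrability of Fz
  obtain ⟨C, hC⟩ := (isCompact_closedBall (0:E3) 1).exists_bound_of_continuousOn hP.continuousOn
  set Cp : ℝ := max C 0 with hCpdef
  have hCp0 : 0 ≤ Cp := le_max_right C 0
  have hCp : ∀ y : E3, |P y| ≤ Cp := by
    intro y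
    rcases le_or_gt ‖y‖ 1 with hy | hy
    · exact le_trans (hC y (mem_closedBall_zero_iff.2 hy)) (le_max_left C 0)
    · rw [hsupp y hy, abs_zero]; exact hCp0
  set M : ℝ := Cp * ((t + ‖x‖) * 2 ^ 4 / (t - ‖x‖) ^ 4) with hMdef
  have hM0 : 0 ≤ M :=
    mul_nonneg hCp0 (div_nonneg (by positivity) (by positivity))
  have hFbound : ∀ z : E3, |Fz t x P z| ≤ (closedBall (0:E3) t).indicator (fun _ => M) z := by
    intro z
    rcases le_or_gt ‖z‖ t with hzle | hzgt
    · rw [indicator_of_mem (mem_closedBall_zero_iff.2 hzle)]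
      rcases eq_or_ne z 0 with rfl | hz0
      · have : Fz t x P 0 = 0 := by simp [Fz]
        rw [this, abs_zero]; exact hM0
      · have hz1 : 0 < ‖z‖ := norm_pos_iff.2 hz0
        rcases eq_or_ne ‖z‖ t with hzt | hzt
        · have : Fz t x P z = 0 := by simp [Fz, hzt]
          rw [this, abs_zero]; exact hM0
        · have hzlt : ‖z‖ < t := lt_of_le_of_ne hzle hzt
          rcases lt_or_ge (t - ‖z‖) ‖x - z‖ with hbig | hsmall
          · have : Fz t x P z = 0 :=
              hPsiBig z (by show t < ‖z‖ + ‖x - z‖; linarith) hzt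
            rw [this, abs_zero]; exact hM0
          · have h2z : ‖z‖ ≤ ‖x‖ + (t - ‖z‖) := by
              have h3 : ‖z‖ - ‖x‖ ≤ ‖z - x‖ := norm_sub_norm_le z x
              rw [norm_sub_rev] at h3
              linarith
            have htz2 : (t - ‖x‖)/2 ≤ t - ‖z‖ := by linarith
            have htzpos : (0:ℝ) < t - ‖z‖ := by linarith
            have hinabs := abs_real_inner_le_norm x z
            have hnum0 : 0 ≤ t * ‖z‖ - (inner ℝ x z : ℝ) := by
              have h4 : (inner ℝ x z : ℝ) ≤ ‖x‖ * ‖z‖ := le_trans (le_abs_self _) hinabs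
              nlinarith
            have hnum1 : t * ‖z‖ - (inner ℝ x z : ℝ) ≤ (t + ‖x‖) * ‖z‖ := by
              have h4 : -(‖x‖ * ‖z‖) ≤ (inner ℝ x z : ℝ) := (abs_le.1 hinabs).1
              nlinarith
            have hden1 : ‖z‖ * ((t - ‖x‖)/2) ^ 4 ≤ ‖z‖ * (t - ‖z‖) ^ 4 :=
              mul_le_mul_of_nonneg_left (pow_le_pow_left₀ (by linarith) htz2 4) hz1.le
            have hdenpos : 0 < ‖z‖ * ((t - ‖x‖)/2) ^ 4 :=
              mul_pos hz1 (pow_pos (by linarith) 4)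
            have hfactor : (t * ‖z‖ - (inner ℝ x z : ℝ)) / (‖z‖ * (t - ‖z‖) ^ 4)
                ≤ (t + ‖x‖) * 2 ^ 4 / (t - ‖x‖) ^ 4 := by
              have h5 : (t * ‖z‖ - (inner ℝ x z : ℝ)) / (‖z‖ * (t - ‖z‖) ^ 4)
                  ≤ ((t + ‖x‖) * ‖z‖) / (‖z‖ * ((t - ‖x‖)/2) ^ 4) :=
                div_le_div₀ (mul_nonneg (by linarith [norm_nonneg x]) hz1.le) hnum1 hdenpos hden1
              have h6 : ((t + ‖x‖) * ‖z‖) / (‖z‖ * ((t - ‖x‖)/2) ^ 4)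
                  = (t + ‖x‖) * 2 ^ 4 / (t - ‖x‖) ^ 4 := by
                rw [div_eq_div_iff hdenpos.ne' (pow_pos (by linarith : (0:ℝ) < t - ‖x‖) 4).ne']
                ring
              rw [h6] at h5
              exact h5
            calc |Fz t x P z|
                = |P (Psi t x z)| * |(t * ‖z‖ - (inner ℝ x z : ℝ)) / (‖z‖ * (t - ‖z‖) ^ 4)| := by
                  rw [Fz, abs_mul]
              _ ≤ Cp * ((t + ‖x‖) * 2 ^ 4 / (t - ‖x‖) ^ 4) := by
                  apply mul_le_mul (hCp _) ?_ (abs_nonneg _) hCp0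
                  rw [abs_of_nonneg (div_nonneg hnum0
                    (mul_nonneg hz1.le (pow_nonneg htzpos.le 4)))]
                  exact hfactor
              _ = M := rfl
    · rw [indicator_of_notMem (fun hm => absurd (mem_closedBall_zero_iff.1 hm) (not_le.2 hzgt))]
      have : Fz t x P z = 0 :=
        hPsiBig z (by show t < ‖z‖ + ‖x - z‖; linarith [norm_nonneg (x - z)]) (ne_of_gt hzgt)
      rw [this, abs_zero]
  have hFmeas : AEStronglyMeasurable (Fz t x P) volume := by
    have m1 : Measurable (Psi t x) := by
      refine Measurable.smul (f := fun z : E3 => (t - ‖z‖)⁻¹) (g := fun z : E3 => x - z) ?_ ?_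
      · exact ((continuous_const.sub continuous_norm).measurable).inv
      · exact (continuous_const.sub continuous_id).measurable
    have m2 : Measurable fun z : E3 => (t * ‖z‖ - (inner ℝ x z : ℝ)) / (‖z‖ * (t - ‖z‖) ^ 4) := by
      apply Measurable.div
      · exact (continuous_const.mul continuous_norm).measurable.sub
          (continuous_const.inner continuous_id).measurable
      · exact (continuous_norm.mul ((continuous_const.sub continuous_norm).pow 4)).measurable
    exact ((hP.measurable.comp m1).mul m2).aestronglyMeasurable
  have hFint : Integrable (Fz t x P) := by
    refine Integrable.mono' (g := (closedBall (0:E3) t).indicator fun _ => M) ?_ hFmeas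
      (Filter.Eventually.of_forall fun z => ?_)
    · exact (integrable_indicator_iff measurableSet_closedBall).2
        (integrableOn_const measure_closedBall_lt_top.ne)
    · rw [Real.norm_eq_abs]
      exact hFbound z
  -- assemble
  have hchain1 : ∫ y in closedBall (0:E3) 1, P y = ∫ y in ball (0:E3) 1 \ {t⁻¹ • x}, P y := by
    refine setIntegral_congr_set ?_
    have h1 : (closedBall (0:E3) 1 : Set E3) =ᵐ[volume] ball 0 1 := by
      rw [ae_eq_set]
      constructor
      · rw [closedBall_diff_ball]
        exact Measure.addHaar_sphere volume 0 1
      · rw [diff_eq_empty.2 ball_subset_closedBall]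
        exact measure_empty
    have h2 : (ball (0:E3) 1 : Set E3) =ᵐ[volume] (ball (0:E3) 1 \ {t⁻¹ • x} : Set E3) :=
      (diff_ae_eq_self.2 (measure_mono_null inter_subset_right (measure_singleton _))).symm
    exact h1.trans h2
  rw [hchain1, ← himg,
    integral_image_eq_integral_abs_det_fderiv_smul volume hsmeas hPsiD hinj P]
  have hchain2 : ∫ z in s, |(PsiD t x z).det| • P (Psi t x z) = ∫ z in s, Fz t x P z := by
    refine setIntegral_congr_fun hsmeas fun z hz => ?_
    rw [hdet z hz, smul_eq_mul, Fz, mul_comm]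
  rw [hchain2, setIntegral_eq_integral_of_ae_compl_eq_zero hFzero, polar_integral _ hFint]
  refine integral_congr_ae (Filter.Eventually.of_forall fun η => ?_)
  exact inner_step t x ht hx P hsupp (η : E3) (mem_sphere_zero_iff_norm.1 η.2)
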